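/- Let H be a real symmetric positive definite n×n matrix, let Γ be a real n×n matrix, and let c > 0 be such that ΓᵀHΓ ⪯ H − c·I in the Loewner order. Then the squared spectral norm of L = H^{1/2} Γ H^{-1/2} satisfies ‖L‖² ≤ 1 − c/‖H‖, where ‖H‖ is the spectral norm of H and H^{1/2} is the positive semidefinite square root of H. -/

import Mathlib

open Matrix

/-- Spectral norm: operator norm induced by the Euclidean norm. -/
noncomputable def specNorm {m n : ℕ} (A : Matrix (Fin m) (Fin n) ℝ) : ℝ :=
  ‖LinearMap.toContinuousLinearMap (Matrix.toEuclideanLin A)‖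

/-- Frobenius norm: square root of the sum of squares of the entries. -/
noncomputable def frobNorm {m n : ℕ} (A : Matrix (Fin m) (Fin n) ℝ) : ℝ :=
  Real.sqrt (∑ i, ∑ j, A i j ^ 2)
open scoped ComplexOrder in
/-- The positive semidefinite square root of a positive semidefinite matrix
(the definition `Matrix.PosSemidef.sqrt` of the older Mathlib, since removed). -/
noncomputable def Matrix.PosSemidef.sqrt {n 𝕜 : Type*} [Fintype n] [RCLike 𝕜] [DecidableEq n]
    {A : Matrix n n 𝕜} (hA : A.PosSemidef) : Matrix n n 𝕜 :=
  hA.1.eigenvectorUnitary.1 * diagonal ((↑) ∘ (√·) ∘ hA.1.eigenvalues) *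
    (star hA.1.eigenvectorUnitary : Matrix n n 𝕜)

open scoped ComplexOrder in
lemma Matrix.PosSemidef.posSemidef_sqrt {n 𝕜 : Type*} [Fintype n] [RCLike 𝕜] [DecidableEq n]
    {A : Matrix n n 𝕜} (hA : A.PosSemidef) : hA.sqrt.PosSemidef := by
  have hd : (diagonal ((↑) ∘ (√·) ∘ hA.1.eigenvalues : n → 𝕜)).PosSemidef :=
    PosSemidef.diagonal (fun i => by simp [Real.sqrt_nonneg])
  have := hd.mul_mul_conjTranspose_same (hA.1.eigenvectorUnitary : Matrix n n 𝕜)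
  unfold Matrix.PosSemidef.sqrt
  rw [star_eq_conjTranspose]
  exact this

open scoped ComplexOrder in
lemma Matrix.PosSemidef.sqrt_mul_self {n 𝕜 : Type*} [Fintype n] [RCLike 𝕜] [DecidableEq n]
    {A : Matrix n n 𝕜} (hA : A.PosSemidef) : hA.sqrt * hA.sqrt = A := by
  have hU : (star hA.1.eigenvectorUnitary : Matrix n n 𝕜) * hA.1.eigenvectorUnitary.1 = 1 :=
    Unitary.coe_star_mul_self _
  have hD : diagonal ((↑) ∘ (√·) ∘ hA.1.eigenvalues : n → 𝕜) *
      diagonal ((↑) ∘ (√·) ∘ hA.1.eigenvalues) = diagonal (RCLike.ofReal ∘ hA.1.eigenvalues) := by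
    rw [diagonal_mul_diagonal]
    congr 1
    funext i
    simp only [Function.comp_apply, ← RCLike.ofReal_mul, Real.mul_self_sqrt (hA.eigenvalues_nonneg i)]
  conv_rhs => rw [hA.1.spectral_theorem, Unitary.conjStarAlgAut_apply]
  unfold Matrix.PosSemidef.sqrt
  calc _ = hA.1.eigenvectorUnitary.1 * diagonal ((↑) ∘ (√·) ∘ hA.1.eigenvalues) *
        ((star hA.1.eigenvectorUnitary : Matrix n n 𝕜) * hA.1.eigenvectorUnitary.1) *
        diagonal ((↑) ∘ (√·) ∘ hA.1.eigenvalues) *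
        (star hA.1.eigenvectorUnitary : Matrix n n 𝕜) := by simp only [Matrix.mul_assoc]
    _ = _ := by rw [hU, Matrix.mul_one, Matrix.mul_assoc _ (diagonal _) (diagonal _), hD]

section aux
variable {n : ℕ}

private lemma specNorm_nonneg (A : Matrix (Fin n) (Fin n) ℝ) : 0 ≤ specNorm A :=
  norm_nonneg _

private lemma specNorm_zero_of_subsingleton (hn : n = 0) (A : Matrix (Fin n) (Fin n) ℝ) :
    specNorm A = 0 := by
  subst hn
  apply le_antisymm _ (norm_nonneg _)
  apply ContinuousLinearMap.opNorm_le_bound _ le_rfl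
  intro x
  have : x = 0 := Subsingleton.elim _ _
  simp [this]

private lemma dot_eq_inner (v w : Fin n → ℝ) :
    v ⬝ᵥ w = inner ℝ ((WithLp.equiv 2 (Fin n → ℝ)).symm v) ((WithLp.equiv 2 (Fin n → ℝ)).symm w) := by
  simp [PiLp.inner_apply, dotProduct, RCLike.inner_apply, mul_comm]

private lemma norm_sq_eq_dot (v : Fin n → ℝ) :
    ‖(WithLp.equiv 2 (Fin n → ℝ)).symm v‖ ^ 2 = v ⬝ᵥ v := by
  rw [dot_eq_inner, real_inner_self_eq_norm_sq]

private lemma mulVec_norm_le (A : Matrix (Fin n) (Fin n) ℝ) (v : Fin n → ℝ) :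
    ‖(WithLp.equiv 2 (Fin n → ℝ)).symm (A *ᵥ v)‖ ≤
      specNorm A * ‖(WithLp.equiv 2 (Fin n → ℝ)).symm v‖ := by
  have h : (WithLp.equiv 2 (Fin n → ℝ)).symm (A *ᵥ v) =
      LinearMap.toContinuousLinearMap (Matrix.toEuclideanLin A)
        ((WithLp.equiv 2 (Fin n → ℝ)).symm v) := by
    simp [Matrix.toEuclideanLin_apply]
  rw [h]
  exact (LinearMap.toContinuousLinearMap (Matrix.toEuclideanLin A)).le_opNorm _

/-- Cauchy–Schwarz type estimate: `vᵀ A v ≤ ‖A‖ ‖v‖²`. -/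
private lemma quad_le_specNorm (A : Matrix (Fin n) (Fin n) ℝ) (v : Fin n → ℝ) :
    v ⬝ᵥ (A *ᵥ v) ≤ specNorm A * (v ⬝ᵥ v) := by
  set v' := (WithLp.equiv 2 (Fin n → ℝ)).symm v
  have h1 : v ⬝ᵥ (A *ᵥ v) =
      inner ℝ v' ((WithLp.equiv 2 (Fin n → ℝ)).symm (A *ᵥ v)) := dot_eq_inner _ _
  calc v ⬝ᵥ (A *ᵥ v) ≤ ‖v'‖ * ‖(WithLp.equiv 2 (Fin n → ℝ)).symm (A *ᵥ v)‖ := by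
        rw [h1]; exact real_inner_le_norm _ _
    _ ≤ ‖v'‖ * (specNorm A * ‖v'‖) :=
        mul_le_mul_of_nonneg_left (mulVec_norm_le A v) (norm_nonneg _)
    _ = specNorm A * (v ⬝ᵥ v) := by rw [← norm_sq_eq_dot]; ring

private lemma dot_transpose_mulVec (A : Matrix (Fin n) (Fin n) ℝ) (u v : Fin n → ℝ) :
    u ⬝ᵥ (Aᵀ *ᵥ v) = (A *ᵥ u) ⬝ᵥ v := by
  rw [dotProduct_mulVec, vecMul_transpose]

private lemma dot_mulVec_mulVec (A : Matrix (Fin n) (Fin n) ℝ) (u w : Fin n → ℝ) :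
    (A *ᵥ u) ⬝ᵥ (A *ᵥ w) = u ⬝ᵥ ((Aᵀ * A) *ᵥ w) := by
  rw [dotProduct_mulVec, dotProduct_mulVec, ← vecMul_vecMul, vecMul_transpose]

end aux

/-- If `H` is symmetric positive definite, `c > 0`, and `ΓᵀHΓ ⪯ H - c•I` (Loewner order),
then the squared spectral norm of `L = H^{1/2} Γ H^{-1/2}` is at most `1 - c/‖H‖`. -/
theorem stmt1 {n : ℕ} (H Γ : Matrix (Fin n) (Fin n) ℝ) (hH : H.PosDef)
    (c : ℝ) (hc : 0 < c)
    (hle : (H - c • (1 : Matrix (Fin n) (Fin n) ℝ) - Γᵀ * H * Γ).PosSemidef) :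
    specNorm (hH.posSemidef.sqrt * Γ * (hH.posSemidef.sqrt)⁻¹) ^ 2 ≤ 1 - c / specNorm H := by
  classical
  -- trivial case n = 0
  rcases Nat.eq_zero_or_pos n with hn | hn
  · rw [specNorm_zero_of_subsingleton hn, specNorm_zero_of_subsingleton hn H]
    norm_num
  obtain ⟨i⟩ : Nonempty (Fin n) := ⟨⟨0, hn⟩⟩
  set S := hH.posSemidef.sqrt with hSdef
  have hS : S.PosSemidef := hH.posSemidef.posSemidef_sqrt
  have hSsym : Sᵀ = S := by
    have := hS.1
    rwa [Matrix.IsHermitian, Matrix.conjTranspose_eq_transpose_of_trivial] at this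
  have hSS : Sᵀ * S = H := by rw [hSsym]; exact hH.posSemidef.sqrt_mul_self
  -- S is invertible
  have hdet : IsUnit S.det := by
    rw [isUnit_iff_ne_zero]
    intro h0
    have : H.det = 0 := by rw [← hSS, Matrix.det_mul, hSsym, h0, mul_zero]
    exact hH.det_pos.ne' this
  have hSinv : S * S⁻¹ = 1 := Matrix.mul_nonsing_inv _ hdet
  -- the hypothesis, in quadratic-form language
  have hGG : ∀ y : Fin n → ℝ,
      (Γ *ᵥ y) ⬝ᵥ (H *ᵥ (Γ *ᵥ y)) ≤ y ⬝ᵥ (H *ᵥ y) - c * (y ⬝ᵥ y) := by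
    intro y
    have h := hle.dotProduct_mulVec_nonneg y
    have hstar : (star y : Fin n → ℝ) = y := rfl
    rw [hstar, Matrix.sub_mulVec, Matrix.sub_mulVec, dotProduct_sub, dotProduct_sub,
      Matrix.smul_mulVec, Matrix.one_mulVec, dotProduct_smul, smul_eq_mul] at h
    have hq : y ⬝ᵥ ((Γᵀ * H * Γ) *ᵥ y) = (Γ *ᵥ y) ⬝ᵥ (H *ᵥ (Γ *ᵥ y)) := by
      rw [mul_assoc, ← Matrix.mulVec_mulVec, dot_transpose_mulVec, Matrix.mulVec_mulVec]
    rw [hq] at h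
    linarith
  -- constants
  have hHq : ∀ y : Fin n → ℝ, y ⬝ᵥ (H *ᵥ y) ≤ specNorm H * (y ⬝ᵥ y) := quad_le_specNorm H
  have hcH : c ≤ specNorm H := by
    set e : Fin n → ℝ := Pi.single i 1 with he
    have hee : e ⬝ᵥ e = 1 := by simp [he, dotProduct, Pi.single_apply]
    have h1 : (0:ℝ) ≤ (Γ *ᵥ e) ⬝ᵥ (H *ᵥ (Γ *ᵥ e)) := by
      have := hH.posSemidef.dotProduct_mulVec_nonneg (Γ *ᵥ e)
      simpa using this
    have h2 := hGG e
    have h3 := hHq e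
    rw [hee] at h2 h3
    linarith
  have hHpos : 0 < specNorm H := lt_of_lt_of_le hc hcH
  have hM : 0 ≤ 1 - c / specNorm H := by
    rw [sub_nonneg, div_le_one hHpos]; exact hcH
  -- the key pointwise estimate
  set L := S * Γ * S⁻¹ with hL
  have key : ∀ x : Fin n → ℝ,
      (L *ᵥ x) ⬝ᵥ (L *ᵥ x) ≤ (1 - c / specNorm H) * (x ⬝ᵥ x) := by
    intro x
    set y := S⁻¹ *ᵥ x with hy
    have hLx : L *ᵥ x = S *ᵥ (Γ *ᵥ y) := by
      rw [hL, hy, Matrix.mulVec_mulVec, Matrix.mulVec_mulVec]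
    have hSy : S *ᵥ y = x := by
      rw [hy, Matrix.mulVec_mulVec, hSinv, Matrix.one_mulVec]
    have e1 : (L *ᵥ x) ⬝ᵥ (L *ᵥ x) = (Γ *ᵥ y) ⬝ᵥ (H *ᵥ (Γ *ᵥ y)) := by
      rw [hLx, dot_mulVec_mulVec, hSS]
    have e2 : y ⬝ᵥ (H *ᵥ y) = x ⬝ᵥ x := by
      rw [← hSS, ← Matrix.mulVec_mulVec, dot_transpose_mulVec, hSy]
    have h4 := hGG y
    have h5 := hHq y
    rw [e2] at h4 h5
    -- c * (y ⬝ᵥ y) ≥ c * (x ⬝ᵥ x) / ‖H‖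
    have h6 : c / specNorm H * (x ⬝ᵥ x) ≤ c * (y ⬝ᵥ y) := by
      rw [div_mul_eq_mul_div, div_le_iff₀ hHpos]
      calc c * (x ⬝ᵥ x) ≤ c * (specNorm H * (y ⬝ᵥ y)) :=
            mul_le_mul_of_nonneg_left h5 hc.le
        _ = c * (y ⬝ᵥ y) * specNorm H := by ring
    rw [e1]
    calc (Γ *ᵥ y) ⬝ᵥ (H *ᵥ (Γ *ᵥ y)) ≤ x ⬝ᵥ x - c * (y ⬝ᵥ y) := h4
      _ ≤ x ⬝ᵥ x - c / specNorm H * (x ⬝ᵥ x) := by linarith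
      _ = (1 - c / specNorm H) * (x ⬝ᵥ x) := by ring
  -- from pointwise to operator norm
  have hb : specNorm L ≤ Real.sqrt (1 - c / specNorm H) := by
    apply ContinuousLinearMap.opNorm_le_bound _ (Real.sqrt_nonneg _)
    intro x
    set v : Fin n → ℝ := WithLp.equiv 2 (Fin n → ℝ) x with hv
    have hx : (WithLp.equiv 2 (Fin n → ℝ)).symm v = x := rfl
    have hfx : LinearMap.toContinuousLinearMap (Matrix.toEuclideanLin L) x =
        (WithLp.equiv 2 (Fin n → ℝ)).symm (L *ᵥ v) := by
      simp [Matrix.toEuclideanLin_apply, hv]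
    rw [hfx]
    have h1 : ‖(WithLp.equiv 2 (Fin n → ℝ)).symm (L *ᵥ v)‖ ^ 2 ≤
        (1 - c / specNorm H) * ‖x‖ ^ 2 := by
      rw [norm_sq_eq_dot, ← hx, norm_sq_eq_dot]
      exact key v
    have h2 : ‖(WithLp.equiv 2 (Fin n → ℝ)).symm (L *ᵥ v)‖ =
        Real.sqrt (‖(WithLp.equiv 2 (Fin n → ℝ)).symm (L *ᵥ v)‖ ^ 2) :=
      (Real.sqrt_sq (norm_nonneg _)).symm
    rw [h2]
    calc Real.sqrt (‖(WithLp.equiv 2 (Fin n → ℝ)).symm (L *ᵥ v)‖ ^ 2) ≤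
          Real.sqrt ((1 - c / specNorm H) * ‖x‖ ^ 2) := Real.sqrt_le_sqrt h1
      _ = Real.sqrt (1 - c / specNorm H) * ‖x‖ := by
          rw [Real.sqrt_mul hM, Real.sqrt_sq (norm_nonneg _)]
  calc specNorm L ^ 2 ≤ Real.sqrt (1 - c / specNorm H) ^ 2 :=
        pow_le_pow_left₀ (specNorm_nonneg L) hb 2
    _ = 1 - c / specNorm H := Real.sq_sqrt hM
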